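/- Let f : ℝ^{n×r} → ℝ be differentiable, X ∈ ℝ^{n×r}, and α, β, δ > 0. Suppose f satisfies the regularity condition RC(α, β, δ): for every U with dist(U, X) ≤ δ, ⟨∇f(U), U − XR_U⟩ ≥ (1/α)‖U − XR_U‖_F² + (1/β)‖∇f(U)‖_F², where R_U is an orthogonal matrix minimizing ‖U − XR‖_F over R with RᵀR = I_r. If dist(U₀, X) ≤ δ and U_{τ+1} = U_τ − μ∇f(U_τ) with step size 0 < μ ≤ 2/β, then for every τ ≥ 0, dist(U_τ, X) ≤ δ and dist²(U_τ, X) ≤ (1 − 2μ/α)^τ · dist²(U₀, X). -/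

import Mathlib

open Matrix

noncomputable def vnorm {ι : Type*} [Fintype ι] (v : ι → ℝ) : ℝ :=
  Real.sqrt (∑ i, v i ^ 2)

noncomputable def frob {α β : Type*} [Fintype α] [Fintype β] (M : Matrix α β ℝ) : ℝ :=
  Real.sqrt (∑ i, ∑ j, M i j ^ 2)

noncomputable def sval {α β : Type*} [Fintype α] [Fintype β] (M : Matrix α β ℝ) (k : ℕ) : ℝ :=
  sSup { t : ℝ | ∃ V : Submodule ℝ (β → ℝ), Module.finrank ℝ V = k ∧
    ∀ v ∈ V, t * vnorm v ≤ vnorm (M.mulVec v) }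

noncomputable def opNorm {α β : Type*} [Fintype α] [Fintype β] (M : Matrix α β ℝ) : ℝ :=
  sval M 1

noncomputable def pdist {α ρ : Type*} [Fintype α] [Fintype ρ] [DecidableEq ρ]
    (U X : Matrix α ρ ℝ) : ℝ :=
  sInf { d : ℝ | ∃ R : Matrix ρ ρ ℝ, Rᵀ * R = 1 ∧ d = frob (U - X * R) }

noncomputable def mip {α β : Type*} [Fintype α] [Fintype β] (A B : Matrix α β ℝ) : ℝ :=
  ∑ i, ∑ j, A i j * B i j

noncomputable def mapA {m : ℕ} {α β : Type*} [Fintype α] [Fintype β]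
    (A : Fin m → Matrix α β ℝ) (Z : Matrix α β ℝ) : Fin m → ℝ :=
  fun k => mip (A k) Z

def HasRIP {m n₁ n₂ : ℕ} (A : Fin m → Matrix (Fin n₁) (Fin n₂) ℝ) (s : ℕ) (δ : ℝ) : Prop :=
  ∀ Z : Matrix (Fin n₁) (Fin n₂) ℝ, Z.rank ≤ s →
    (1 - δ) * frob Z ^ 2 ≤ ∑ k, mapA A Z k ^ 2 ∧
      ∑ k, mapA A Z k ^ 2 ≤ (1 + δ) * frob Z ^ 2

noncomputable def gradU {m n₁ n₂ r : ℕ} (A : Fin m → Matrix (Fin n₁) (Fin n₂) ℝ)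
    (M : Matrix (Fin n₁) (Fin n₂) ℝ)
    (U : Matrix (Fin n₁) (Fin r) ℝ) (V : Matrix (Fin n₂) (Fin r) ℝ) :
    Matrix (Fin n₁) (Fin r) ℝ :=
  (∑ k, mip (A k) (U * Vᵀ - M) • (A k * V)) + (1 / 4 : ℝ) • (U * (Uᵀ * U - Vᵀ * V))

noncomputable def gradV {m n₁ n₂ r : ℕ} (A : Fin m → Matrix (Fin n₁) (Fin n₂) ℝ)
    (M : Matrix (Fin n₁) (Fin n₂) ℝ)
    (U : Matrix (Fin n₁) (Fin r) ℝ) (V : Matrix (Fin n₂) (Fin r) ℝ) :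
    Matrix (Fin n₂) (Fin r) ℝ :=
  (∑ k, mip (A k) (U * Vᵀ - M) • ((A k)ᵀ * U)) + (1 / 4 : ℝ) • (V * (Vᵀ * V - Uᵀ * U))

noncomputable def gradg {m n₁ n₂ r : ℕ} (A : Fin m → Matrix (Fin n₁) (Fin n₂) ℝ)
    (M : Matrix (Fin n₁) (Fin n₂) ℝ)
    (U : Matrix (Fin n₁) (Fin r) ℝ) (V : Matrix (Fin n₂) (Fin r) ℝ) :
    Matrix (Fin n₁ ⊕ Fin n₂) (Fin r) ℝ :=
  Matrix.fromRows (gradU A M U V) (gradV A M U V)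

attribute [local instance] Matrix.normedAddCommGroup Matrix.normedSpace

section helpers
variable {ι κ : Type*} [Fintype ι] [Fintype κ]

lemma frob_nonneg' (M : Matrix ι κ ℝ) : 0 ≤ frob M := Real.sqrt_nonneg _

lemma frob_sq' (M : Matrix ι κ ℝ) : frob M ^ 2 = ∑ i, ∑ j, M i j ^ 2 :=
  Real.sq_sqrt (by positivity)

lemma mip_le' (A B : Matrix ι κ ℝ) : mip A B ≤ frob A * frob B := by
  have hcs : (∑ p : ι × κ, A p.1 p.2 * B p.1 p.2) ^ 2 ≤
      (∑ p : ι × κ, A p.1 p.2 ^ 2) * (∑ p : ι × κ, B p.1 p.2 ^ 2) := by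
    exact Finset.sum_mul_sq_le_sq_mul_sq Finset.univ (fun p : ι × κ => A p.1 p.2)
      (fun p => B p.1 p.2)
  rw [Fintype.sum_prod_type] at hcs
  have h1 : mip A B ^ 2 ≤ frob A ^ 2 * frob B ^ 2 := by
    rw [frob_sq', frob_sq', mip]; simpa [Fintype.sum_prod_type] using hcs
  nlinarith [frob_nonneg' A, frob_nonneg' B, mul_nonneg (frob_nonneg' A) (frob_nonneg' B)]

lemma frob_expand' (D G : Matrix ι κ ℝ) (c : ℝ) :
    frob (D - c • G) ^ 2 = frob D ^ 2 - 2 * c * mip G D + c ^ 2 * frob G ^ 2 := by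
  rw [frob_sq', frob_sq', frob_sq', mip]
  have h : ∀ i j, (D - c • G) i j ^ 2 =
      D i j ^ 2 - 2 * c * (G i j * D i j) + c ^ 2 * G i j ^ 2 := by
    intro i j
    simp only [Matrix.sub_apply, Matrix.smul_apply, smul_eq_mul]
    ring
  simp_rw [h, Finset.sum_add_distrib, Finset.sum_sub_distrib, ← Finset.mul_sum]

end helpers

section pdistlem
variable {ι ρ : Type*} [Fintype ι] [Fintype ρ] [DecidableEq ρ]

lemma pdist_nonneg' (U X : Matrix ι ρ ℝ) : 0 ≤ pdist U X := by
  apply Real.sInf_nonneg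
  rintro d ⟨R, -, rfl⟩
  exact frob_nonneg' _

lemma pdist_le' (U X : Matrix ι ρ ℝ) {R : Matrix ρ ρ ℝ} (hR : Rᵀ * R = 1) :
    pdist U X ≤ frob (U - X * R) := by
  apply csInf_le
  · exact ⟨0, by rintro d ⟨R', -, rfl⟩; exact frob_nonneg' _⟩
  · exact ⟨R, hR, rfl⟩

lemma exists_pdist_min (U X : Matrix ι ρ ℝ) :
    ∃ R : Matrix ρ ρ ℝ, Rᵀ * R = 1 ∧ pdist U X = frob (U - X * R) ∧
      ∀ R' : Matrix ρ ρ ℝ, R'ᵀ * R' = 1 → frob (U - X * R) ≤ frob (U - X * R') := by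
  classical
  set O : Set (Matrix ρ ρ ℝ) := {R | Rᵀ * R = 1} with hO
  have hne : O.Nonempty := ⟨1, by simp [hO]⟩
  have hclosed : IsClosed O := by
    have : O = (fun R : Matrix ρ ρ ℝ => Rᵀ * R) ⁻¹' {1} := by ext R; simp [hO]
    rw [this]
    exact isClosed_singleton.preimage ((continuous_id.matrix_transpose).matrix_mul continuous_id)
  have hbdd : Bornology.IsBounded O := by
    rw [isBounded_iff_forall_norm_le]
    refine ⟨1, fun R hR => ?_⟩
    rw [Matrix.norm_le_iff (by norm_num)]
    intro i j
    have hdiag : ∑ k, R k j * R k j = 1 := by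
      have := congrFun (congrFun hR j) j
      simpa [Matrix.mul_apply, Matrix.transpose_apply, Matrix.one_apply] using this
    have hsq : R i j ^ 2 ≤ 1 := by
      have h5 : R i j * R i j ≤ ∑ k, R k j * R k j :=
        Finset.single_le_sum (f := fun k => R k j * R k j)
          (fun k _ => mul_self_nonneg _) (Finset.mem_univ i)
      rw [hdiag] at h5; nlinarith
    have : |R i j| ≤ 1 := by nlinarith [abs_nonneg (R i j), sq_abs (R i j)]
    simpa using this
  have hcompact : IsCompact O := Metric.isCompact_of_isClosed_isBounded hclosed hbdd
  have hcont : Continuous fun R : Matrix ρ ρ ℝ => frob (U - X * R) := by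
    have hfrob : Continuous (frob : Matrix ι ρ ℝ → ℝ) := by
      unfold frob
      exact Real.continuous_sqrt.comp (continuous_finset_sum _ fun i _ =>
        continuous_finset_sum _ fun j _ =>
          (((continuous_apply j).comp (continuous_apply i)).pow 2))
    exact hfrob.comp (continuous_const.sub (continuous_const.matrix_mul continuous_id))
  obtain ⟨R, hRmem, hmin⟩ := hcompact.exists_isMinOn hne hcont.continuousOn
  have hmin' : ∀ R' : Matrix ρ ρ ℝ, R'ᵀ * R' = 1 → frob (U - X * R) ≤ frob (U - X * R') :=
    fun R' hR' => hmin hR'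
  refine ⟨R, hRmem, le_antisymm (pdist_le' U X hRmem) ?_, hmin'⟩
  have hmem : frob (U - X * R) ∈
      {d : ℝ | ∃ R' : Matrix ρ ρ ℝ, R'ᵀ * R' = 1 ∧ d = frob (U - X * R')} := ⟨R, hRmem, rfl⟩
  apply le_csInf (Set.nonempty_of_mem hmem)
  rintro d ⟨R', hR', rfl⟩
  exact hmin' R' hR'

end pdistlem


set_option maxHeartbeats 2000000 in
/-- Regularity condition implies geometric convergence of gradient descent. -/
theorem regularity_condition_implies_convergence {n r : ℕ}
    (f : Matrix (Fin n) (Fin r) ℝ → ℝ) (hf : Differentiable ℝ f)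
    (gradf : Matrix (Fin n) (Fin r) ℝ → Matrix (Fin n) (Fin r) ℝ)
    (hgrad : ∀ U H : Matrix (Fin n) (Fin r) ℝ, fderiv ℝ f U H = mip (gradf U) H)
    (X : Matrix (Fin n) (Fin r) ℝ) (α β δ : ℝ)
    (hα : 0 < α) (hβ : 0 < β) (hδ : 0 < δ)
    (hRC : ∀ U : Matrix (Fin n) (Fin r) ℝ, pdist U X ≤ δ →
      ∀ R : Matrix (Fin r) (Fin r) ℝ, Rᵀ * R = 1 →
      (∀ R' : Matrix (Fin r) (Fin r) ℝ, R'ᵀ * R' = 1 →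
        frob (U - X * R) ≤ frob (U - X * R')) →
      (1 / α) * frob (U - X * R) ^ 2 + (1 / β) * frob (gradf U) ^ 2 ≤
        mip (gradf U) (U - X * R))
    (μ : ℝ) (hμ0 : 0 < μ) (hμ : μ ≤ 2 / β)
    (U : ℕ → Matrix (Fin n) (Fin r) ℝ) (h0 : pdist (U 0) X ≤ δ)
    (hiter : ∀ τ : ℕ, U (τ + 1) = U τ - μ • gradf (U τ)) :
    ∀ τ : ℕ, pdist (U τ) X ≤ δ ∧
      pdist (U τ) X ^ 2 ≤ (1 - 2 * μ / α) ^ τ * pdist (U 0) X ^ 2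

 := by
  -- key auxiliary: the αβ ≥ 4 bound
  have habs : ∀ d g : ℝ, 0 < d → 0 ≤ g →
      (1 / α) * d ^ 2 + (1 / β) * g ^ 2 ≤ g * d → 4 ≤ α * β := by
    intro d g hd hg h1
    have hgpos : 0 < g := by
      rcases hg.lt_or_eq with h | h
      · exact h
      · exfalso
        rw [← h] at h1
        simp at h1
        have h2 : 0 < α⁻¹ * d ^ 2 := by positivity
        linarith
    have h1' : β * d ^ 2 + α * g ^ 2 ≤ α * β * (g * d) := by
      have h := mul_le_mul_of_nonneg_left h1 (mul_pos hα hβ).le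
      calc β * d ^ 2 + α * g ^ 2
          = α * β * ((1 / α) * d ^ 2 + (1 / β) * g ^ 2) := by field_simp
        _ ≤ α * β * (g * d) := h
    have e : 4 * (α * β) * (d * g) ^ 2 ≤ (β * d ^ 2 + α * g ^ 2) ^ 2 := by
      nlinarith [sq_nonneg (β * d ^ 2 - α * g ^ 2)]
    have e2 : (β * d ^ 2 + α * g ^ 2) ^ 2 ≤ (α * β * (g * d)) ^ 2 := by
      have h0' : 0 ≤ β * d ^ 2 + α * g ^ 2 := by positivity
      exact pow_le_pow_left₀ h0' h1' 2
    have hK : 0 < α * β * (d * g) ^ 2 := by positivity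
    by_contra hcon
    push_neg at hcon
    have h5 : (α * β) * (α * β * (d * g) ^ 2) < 4 * (α * β * (d * g) ^ 2) :=
      mul_lt_mul_of_pos_right hcon hK
    linarith [e, e2, h5]
  -- one step of the iteration
  have key_step : ∀ τ : ℕ, pdist (U τ) X ≤ δ →
      pdist (U (τ + 1)) X ^ 2 ≤ (1 - 2 * μ / α) * pdist (U τ) X ^ 2 ∧
        pdist (U (τ + 1)) X ≤ δ := by
    intro τ hdle
    obtain ⟨R, hR, hpd, hmin⟩ := exists_pdist_min (U τ) X
    have hRC' : (1 / α) * frob (U τ - X * R) ^ 2 + (1 / β) * frob (gradf (U τ)) ^ 2 ≤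
        mip (gradf (U τ)) (U τ - X * R) := hRC (U τ) hdle R hR hmin
    have h2 : U (τ + 1) - X * R = (U τ - X * R) - μ • gradf (U τ) := by
      rw [hiter τ]; exact sub_right_comm _ _ _
    have h1 : pdist (U (τ + 1)) X ≤ frob ((U τ - X * R) - μ • gradf (U τ)) := by
      rw [← h2]; exact pdist_le' _ _ hR
    have h3 : pdist (U (τ + 1)) X ^ 2 ≤ frob ((U τ - X * R) - μ • gradf (U τ)) ^ 2 :=
      pow_le_pow_left₀ (pdist_nonneg' _ _) h1 2
    have h4 := frob_expand' (U τ - X * R) (gradf (U τ)) μ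
    have hRC2 : α⁻¹ * frob (U τ - X * R) ^ 2 + β⁻¹ * frob (gradf (U τ)) ^ 2 ≤
        mip (gradf (U τ)) (U τ - X * R) := by
      rw [one_div, one_div] at hRC'; exact hRC'
    have hμ2 : μ ≤ 2 * β⁻¹ := by rw [div_eq_mul_inv] at hμ; exact hμ
    have hstep : pdist (U (τ + 1)) X ^ 2 ≤ (1 - 2 * μ / α) * pdist (U τ) X ^ 2 := by
      rw [hpd, div_eq_mul_inv]
      nlinarith [h3, h4,
        mul_le_mul_of_nonneg_left hRC2 (by positivity : (0:ℝ) ≤ 2 * μ),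
        mul_nonneg (mul_nonneg (by linarith : (0:ℝ) ≤ 2 * β⁻¹ - μ) hμ0.le)
          (sq_nonneg (frob (gradf (U τ))))]
    refine ⟨hstep, ?_⟩
    have hdn : 0 ≤ pdist (U τ) X := pdist_nonneg' _ _
    have hc1 : (1 - 2 * μ / α) * pdist (U τ) X ^ 2 ≤ pdist (U τ) X ^ 2 := by
      rw [div_eq_mul_inv]
      nlinarith [mul_nonneg (mul_nonneg (by positivity : (0:ℝ) ≤ 2 * μ)
        (inv_nonneg.2 hα.le)) (sq_nonneg (pdist (U τ) X))]
    have hsq : pdist (U τ) X ^ 2 ≤ δ ^ 2 := by nlinarith [hdn, hdle]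
    have hd2 : pdist (U (τ + 1)) X ^ 2 ≤ δ ^ 2 := by linarith [hstep, hc1, hsq]
    nlinarith [pdist_nonneg' (U (τ + 1)) X, hd2, hδ]
  rcases (pdist_nonneg' (U 0) X).lt_or_eq with hd0 | hd0
  · -- pdist (U 0) X > 0 : derive 0 ≤ 1 - 2μ/α, then induct
    obtain ⟨R0, hR0, hpd0, hmin0⟩ := exists_pdist_min (U 0) X
    have hRC0 := hRC (U 0) h0 R0 hR0 hmin0
    have hmle : mip (gradf (U 0)) (U 0 - X * R0) ≤
        frob (gradf (U 0)) * frob (U 0 - X * R0) := mip_le' _ _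
    have h4' : 4 ≤ α * β := by
      apply habs (frob (U 0 - X * R0)) (frob (gradf (U 0)))
      · rw [← hpd0]; exact hd0
      · exact frob_nonneg' _
      · linarith [hRC0, hmle]
    have hc : 0 ≤ 1 - 2 * μ / α := by
      rw [sub_nonneg, div_le_one hα]
      have hb1 : 4 / β ≤ α := (div_le_iff₀ hβ).2 (by linarith)
      have hb2 : 2 * μ ≤ 4 / β := by
        rw [le_div_iff₀ hβ]
        have := (le_div_iff₀ hβ).1 hμ
        linarith
      linarith
    intro τ
    induction τ with
    | zero => exact ⟨h0, by simp⟩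
    | succ τ ih =>
      obtain ⟨ihδ, ihsq⟩ := ih
      obtain ⟨hstep, hδ'⟩ := key_step τ ihδ
      refine ⟨hδ', ?_⟩
      calc pdist (U (τ + 1)) X ^ 2 ≤ (1 - 2 * μ / α) * pdist (U τ) X ^ 2 := hstep
        _ ≤ (1 - 2 * μ / α) * ((1 - 2 * μ / α) ^ τ * pdist (U 0) X ^ 2) :=
            mul_le_mul_of_nonneg_left ihsq hc
        _ = (1 - 2 * μ / α) ^ (τ + 1) * pdist (U 0) X ^ 2 := by ring
  · -- pdist (U 0) X = 0 : everything stays at 0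
    have hz : ∀ τ : ℕ, pdist (U τ) X = 0 := by
      intro τ
      induction τ with
      | zero => exact hd0.symm
      | succ τ ih =>
        have hle : pdist (U τ) X ≤ δ := by rw [ih]; exact hδ.le
        have h1 := (key_step τ hle).1
        rw [ih] at h1
        have h2 : pdist (U (τ + 1)) X ^ 2 ≤ 0 := by simpa using h1
        nlinarith [pdist_nonneg' (U (τ + 1)) X]
    intro τ
    rw [hz τ, ← hd0]
    exact ⟨hδ.le, by simp⟩
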